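/- Let Γ be a valued structure over a finite domain. Then Γ has a cyclic fractional polymorphism (of some arity ℓ ≥ 2) if and only if Sup(fPol(Γ)) contains a cyclic operation (of some arity ℓ ≥ 2). -/

import Mathlib

open scoped ENNReal NNReal

/-- The value space `ℚ ∪ {∞}`. -/
abbrev QInf : Type := WithTop ℚ

/-- The embedding of `ℚ ∪ {∞}` into the extended reals. -/
noncomputable def QInf.toE (x : QInf) : EReal :=
  WithTop.recTopCoe ⊤ (fun q : ℚ => ((q : ℝ) : EReal)) x

/-- A relational signature: a collection of relation symbols with arities. -/
structure Signature where
  symbols : Type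
  arity : symbols → ℕ

/-- A valued `τ`-structure with domain `C`. -/
def VStruct (τ : Signature) (C : Type) : Type :=
  ∀ s : τ.symbols, (Fin (τ.arity s) → C) → QInf

/-- A probability distribution on a finite type, given by its weight function. -/
def FinDist {β : Type} [Fintype β] (w : β → ℝ≥0) : Prop :=
  ∑ f : β, w f = 1

/-- Over a finite domain, a fractional operation (given by its weight function `w`)
improves a `k`-ary valued relation `R`:
`Σ_f w(f)·R(f(a^1,…,a^ℓ)) ≤ (1/ℓ)·Σ_j R(a^j)` for all `a^1,…,a^ℓ ∈ C^k`
(where `0·∞ = 0`, computed in the extended reals). -/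
def FinImproves {C : Type} [Fintype C] [DecidableEq C] {ℓ k : ℕ}
    (w : ((Fin ℓ → C) → C) → ℝ≥0) (R : (Fin k → C) → QInf) : Prop :=
  ∀ a : Fin ℓ → Fin k → C,
    (∑ f : (Fin ℓ → C) → C,
        (((w f : ℝ)) : EReal) * QInf.toE (R fun i => f fun j => a j i)) ≤
      (((ℓ : ℝ)⁻¹ : ℝ) : EReal) * ∑ j : Fin ℓ, QInf.toE (R (a j))

/-- A fractional polymorphism of a valued structure over a finite domain: a probability
distribution on the `ℓ`-ary operations improving every valued relation of `Γ`. -/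
def FinFracPol {τ : Signature} {C : Type} [Fintype C] [DecidableEq C]
    (Γ : VStruct τ C) {ℓ : ℕ} (w : ((Fin ℓ → C) → C) → ℝ≥0) : Prop :=
  FinDist w ∧ ∀ s : τ.symbols, FinImproves w (Γ s)

/-- A fractional homomorphism from `Δ` (domain `D`) to `Γ` (domain `C`) over finite
domains: a probability distribution `ν` on the maps `D → C` with
`Σ_g ν(g)·R^Γ(g(a)) ≤ R^Δ(a)` for every symbol and tuple. -/
def FinFracHom {τ : Signature} {D C : Type} [Fintype D] [DecidableEq D] [Fintype C]
    (Δ : VStruct τ D) (Γ : VStruct τ C) (ν : (D → C) → ℝ≥0) : Prop :=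
  FinDist ν ∧
    ∀ (s : τ.symbols) (a : Fin (τ.arity s) → D),
      (∑ g : D → C, (((ν g : ℝ)) : EReal) * QInf.toE (Γ s (g ∘ a))) ≤
        QInf.toE (Δ s a)

/-- A cyclic operation: `f(x_1,…,x_ℓ) = f(x_2,…,x_ℓ,x_1)`. -/
def IsCyclicOp {C : Type} {ℓ : ℕ} (f : (Fin ℓ → C) → C) : Prop :=
  ∀ x : Fin ℓ → C, f x = f (x ∘ finRotate ℓ)

/- ### Auxiliary machinery for the proof -/

section CyclicAux

noncomputable def qval (x : QInf) : ℝ := ((x.untopD 0 : ℚ) : ℝ)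

lemma toE_ne_bot (x : QInf) : QInf.toE x ≠ ⊥ := by
  cases x using WithTop.recTopCoe with
  | top => simp [QInf.toE]
  | coe q => simp [QInf.toE]

lemma toE_top : QInf.toE ⊤ = ⊤ := rfl

lemma toE_of_ne_top {x : QInf} (h : x ≠ ⊤) : QInf.toE x = ((qval x : ℝ) : EReal) := by
  cases x using WithTop.recTopCoe with
  | top => exact absurd rfl h
  | coe q => simp [QInf.toE, qval]

lemma ereal_coe_sum {α : Type*} (s : Finset α) (u : α → ℝ) :
    ((∑ i ∈ s, u i : ℝ) : EReal) = ∑ i ∈ s, ((u i : ℝ) : EReal) :=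
  map_sum (⟨⟨(fun x : ℝ => (x : EReal)), EReal.coe_zero⟩, EReal.coe_add⟩ : ℝ →+ EReal) u s

lemma ereal_sum_ne_bot {α : Type*} (s : Finset α) (u : α → EReal)
    (h : ∀ i ∈ s, u i ≠ ⊥) : ∑ i ∈ s, u i ≠ ⊥ := by
  classical
  induction s using Finset.induction_on with
  | empty => simp
  | insert _ _ hx ih =>
    rw [Finset.sum_insert hx]
    rw [Ne, EReal.add_eq_bot_iff]
    push_neg
    exact ⟨h _ (Finset.mem_insert_self _ _), ih fun i hi => h i (Finset.mem_insert_of_mem hi)⟩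

lemma ereal_sum_eq_top {α : Type*} (s : Finset α) (u : α → EReal) {i₀ : α} (hi₀ : i₀ ∈ s)
    (htop : u i₀ = ⊤) (h : ∀ i ∈ s, u i ≠ ⊥) : ∑ i ∈ s, u i = ⊤ := by
  classical
  rw [← Finset.add_sum_erase s u hi₀, htop]
  exact EReal.top_add_of_ne_bot (ereal_sum_ne_bot _ _ fun i hi => h i (Finset.mem_erase.1 hi).2)

lemma term_ne_bot (c : ℝ≥0) (x : QInf) : ((c : ℝ) : EReal) * QInf.toE x ≠ ⊥ := by
  rcases eq_zero_or_pos c with h | h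
  · rw [h]; simp
  · cases x using WithTop.recTopCoe with
    | top =>
      rw [toE_top, EReal.mul_top_of_pos (by exact_mod_cast h)]
      simp
    | coe q =>
      show ¬((c:ℝ):EReal) * ((q:ℝ):EReal) = ⊥
      rw [← EReal.coe_mul]
      exact EReal.coe_ne_bot _

lemma term_eq_coe {c : ℝ≥0} {x : QInf} (h : x = ⊤ → c = 0) :
    ((c : ℝ) : EReal) * QInf.toE x = (((c : ℝ) * qval x : ℝ) : EReal) := by
  by_cases hx : x = ⊤
  · rw [h hx, hx]
    simp [qval]
  · rw [toE_of_ne_top hx, ← EReal.coe_mul]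

section Rot
variable {C : Type} {n : ℕ}

open Fin.NatCast in
lemma finRotate_pow_apply (k : ℕ) (i : Fin (n+1)) :
    ((finRotate (n+1))^k) i = i + (k : Fin (n+1)) := by
  induction k with
  | zero => simp
  | succ k ih =>
    rw [pow_succ', Equiv.Perm.mul_apply, finRotate_succ_apply, Nat.cast_add, Nat.cast_one]
    rw [ih]
    abel

open Fin.NatCast in
lemma finRotate_pow_val_apply (s j : Fin (n+1)) :
    ((finRotate (n+1))^(s : ℕ)) j = j + s := by
  rw [finRotate_pow_apply, Fin.cast_val_eq_self]

/-- Composition operation: `TOpc f g x = f (r ↦ g (x ∘ ρ^r))`. -/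
def TOpc {ℓ : ℕ} (f g : (Fin ℓ → C) → C) : (Fin ℓ → C) → C :=
  fun x => f (fun r => g (fun j => x (((finRotate ℓ)^(r : ℕ)) j)))

lemma TOpc_cyclic {f g : (Fin (n+1) → C) → C}
    (h : IsCyclicOp f ∨ IsCyclicOp g) : IsCyclicOp (TOpc f g) := by
  intro x
  show f _ = f _
  rcases h with hf | hg
  · rw [hf (fun r => g (fun j => x (((finRotate (n+1))^(r : ℕ)) j)))]
    congr 1
    funext r
    simp only [Function.comp_apply]
    congr 1
    funext j
    simp only [finRotate_pow_val_apply, finRotate_succ_apply]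
    congr 1
    abel
  · congr 1
    funext r
    rw [hg (fun j => x (((finRotate (n+1))^(r : ℕ)) j))]
    congr 1
    funext j
    simp only [Function.comp_apply, finRotate_pow_val_apply, finRotate_succ_apply]
    congr 1
    abel
end Rot

section Comp
variable {C : Type} [Fintype C] [DecidableEq C] {ℓ k : ℕ}

/-- The real-valued characterization form of `FinImproves`. -/
def GoodFor (w : ((Fin ℓ → C) → C) → ℝ≥0) (R : (Fin k → C) → QInf) : Prop :=
  ∀ a : Fin ℓ → Fin k → C, (∀ j, R (a j) ≠ ⊤) →
    ((∀ f, R (fun i => f fun j => a j i) = ⊤ → w f = 0) ∧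
     ∑ f : (Fin ℓ → C) → C, (w f : ℝ) * qval (R fun i => f fun j => a j i) ≤
       (ℓ : ℝ)⁻¹ * ∑ j : Fin ℓ, qval (R (a j)))

lemma finImproves_iff (hℓ : 1 ≤ ℓ)
    (w : ((Fin ℓ → C) → C) → ℝ≥0) (R : (Fin k → C) → QInf) :
    FinImproves w R ↔ GoodFor w R := by
  constructor
  · intro H a hfin
    have hRHS : ((((ℓ : ℝ)⁻¹ : ℝ)) : EReal) * ∑ j : Fin ℓ, QInf.toE (R (a j))
        = (((ℓ : ℝ)⁻¹ * ∑ j : Fin ℓ, qval (R (a j)) : ℝ) : EReal) := by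
      rw [EReal.coe_mul, ereal_coe_sum]
      congr 1
      exact Finset.sum_congr rfl fun j _ => toE_of_ne_top (hfin j)
    have key : ∀ f, R (fun i => f fun j => a j i) = ⊤ → w f = 0 := by
      intro f hf
      by_contra hwf
      have hpos : (0 : ℝ) < (w f : ℝ) := by
        exact_mod_cast (zero_lt_iff.2 hwf)
      have hterm : ((w f : ℝ) : EReal) * QInf.toE (R fun i => f fun j => a j i) = ⊤ := by
        rw [hf, toE_top, EReal.mul_top_of_pos (by exact_mod_cast hpos)]
      have := H a
      rw [hRHS, ereal_sum_eq_top Finset.univ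
        (fun g => ((w g : ℝ) : EReal) * QInf.toE (R fun i => g fun j => a j i))
        (Finset.mem_univ f) hterm (fun g _ => term_ne_bot _ _)] at this
      exact absurd this (by simp [top_le_iff, ← EReal.coe_mul])
    refine ⟨key, ?_⟩
    have := H a
    rw [hRHS] at this
    have hLHS : (∑ f : (Fin ℓ → C) → C,
        (((w f : ℝ)) : EReal) * QInf.toE (R fun i => f fun j => a j i))
        = (((∑ f : (Fin ℓ → C) → C, (w f : ℝ) * qval (R fun i => f fun j => a j i)) : ℝ) : EReal) := by
      rw [ereal_coe_sum]
      exact Finset.sum_congr rfl fun f _ => term_eq_coe (key f)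
    rw [hLHS] at this
    exact_mod_cast this
  · intro H a
    by_cases hfin : ∀ j, R (a j) ≠ ⊤
    · obtain ⟨h1, h2⟩ := H a hfin
      calc (∑ f : (Fin ℓ → C) → C,
          (((w f : ℝ)) : EReal) * QInf.toE (R fun i => f fun j => a j i))
          = (((∑ f : (Fin ℓ → C) → C, (w f : ℝ) * qval (R fun i => f fun j => a j i)) : ℝ) : EReal) := by
            rw [ereal_coe_sum]
            exact Finset.sum_congr rfl fun f _ => term_eq_coe (h1 f)
        _ ≤ (((ℓ : ℝ)⁻¹ * ∑ j : Fin ℓ, qval (R (a j)) : ℝ) : EReal) := by exact_mod_cast h2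
        _ = ((((ℓ : ℝ)⁻¹ : ℝ)) : EReal) * ∑ j : Fin ℓ, QInf.toE (R (a j)) := by
            rw [EReal.coe_mul, ereal_coe_sum]
            congr 1
            exact Finset.sum_congr rfl fun j _ => (toE_of_ne_top (hfin j)).symm
    · push_neg at hfin
      obtain ⟨j₀, hj₀⟩ := hfin
      have : ∑ j : Fin ℓ, QInf.toE (R (a j)) = ⊤ :=
        ereal_sum_eq_top Finset.univ _ (Finset.mem_univ j₀) (by rw [hj₀, toE_top])
          (fun j _ => toE_ne_bot _)
      rw [this, EReal.mul_top_of_pos]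
      · exact le_top
      · exact_mod_cast inv_pos.2 (by exact_mod_cast Nat.lt_of_lt_of_le Nat.zero_lt_one hℓ : (0:ℝ) < ℓ)

noncomputable def fopComp (w v : ((Fin ℓ → C) → C) → ℝ≥0) : ((Fin ℓ → C) → C) → ℝ≥0 :=
  fun h => ∑ f : (Fin ℓ → C) → C, ∑ g : (Fin ℓ → C) → C,
    if TOpc f g = h then w f * v g else 0

lemma fopComp_sum (w v : ((Fin ℓ → C) → C) → ℝ≥0) :
    ∑ h : (Fin ℓ → C) → C, fopComp w v h
      = (∑ f : (Fin ℓ → C) → C, w f) * (∑ g : (Fin ℓ → C) → C, v g) := by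
  unfold fopComp
  rw [Finset.sum_comm]
  rw [Finset.sum_mul_sum]
  refine Finset.sum_congr rfl fun f _ => ?_
  rw [Finset.sum_comm]
  refine Finset.sum_congr rfl fun g _ => ?_
  rw [Finset.sum_ite_eq Finset.univ (TOpc f g) (fun _ => w f * v g)]
  simp

lemma fopComp_dist {w v : ((Fin ℓ → C) → C) → ℝ≥0} (hw : FinDist w) (hv : FinDist v) :
    FinDist (fopComp w v) := by
  unfold FinDist
  rw [fopComp_sum, hw, hv, one_mul]

lemma fopComp_good (hℓ : 1 ≤ ℓ) {w v : ((Fin ℓ → C) → C) → ℝ≥0} {R : (Fin k → C) → QInf}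
    (hw : GoodFor w R) (hv : GoodFor v R) : GoodFor (fopComp w v) R := by
  intro a hfin
  set ρ := finRotate ℓ with hρ
  set a' : Fin ℓ → Fin ℓ → Fin k → C := fun r j => a ((ρ^(r:ℕ)) j) with ha'
  have hfin' : ∀ r j, R (a' r j) ≠ ⊤ := fun r j => hfin _
  set b : ((Fin ℓ → C) → C) → Fin ℓ → Fin k → C :=
    fun g r i => g (fun j => a' r j i) with hb
  have hvgood : ∀ r : Fin ℓ, (∀ g, R (b g r) = ⊤ → v g = 0) ∧
      ∑ g : (Fin ℓ → C) → C, (v g : ℝ) * qval (R (b g r)) ≤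
        (ℓ : ℝ)⁻¹ * ∑ j : Fin ℓ, qval (R (a' r j)) := fun r => hv (a' r) (hfin' r)
  have hbfin : ∀ g, v g ≠ 0 → ∀ r, R (b g r) ≠ ⊤ := by
    intro g hg r hT
    exact hg ((hvgood r).1 g hT)
  have key : ∀ f g, (fun i => (TOpc f g) fun j => a j i) = (fun i => f fun r => b g r i) :=
    fun f g => rfl
  constructor
  · intro h hT
    refine Finset.sum_eq_zero fun f _ => Finset.sum_eq_zero fun g _ => ?_
    split_ifs with hfg
    · by_cases hg : v g = 0
      · rw [hg, mul_zero]
      · have hwgood := hw (b g) (hbfin g hg)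
        have : R (fun i => f fun r => b g r i) = ⊤ := by
          rw [← key f g, hfg]; exact hT
        rw [hwgood.1 f this, zero_mul]
    · rfl
  · have hl0 : (0:ℝ) < (ℓ:ℝ) := by exact_mod_cast Nat.lt_of_lt_of_le Nat.zero_lt_one hℓ
    have step1 : ∑ h : (Fin ℓ → C) → C, (fopComp w v h : ℝ) * qval (R fun i => h fun j => a j i)
        = ∑ g : (Fin ℓ → C) → C, ∑ f : (Fin ℓ → C) → C,
            (v g : ℝ) * ((w f : ℝ) * qval (R fun i => f fun r => b g r i)) := by
      trans (∑ f : (Fin ℓ → C) → C, ∑ g : (Fin ℓ → C) → C,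
          (w f : ℝ) * (v g : ℝ) * qval (R fun i => (TOpc f g) fun j => a j i))
      · trans (∑ h : (Fin ℓ → C) → C, ∑ f : (Fin ℓ → C) → C, ∑ g : (Fin ℓ → C) → C,
            if TOpc f g = h then (w f : ℝ) * (v g : ℝ) * qval (R fun i => h fun j => a j i) else 0)
        · refine Finset.sum_congr rfl fun h _ => ?_
          unfold fopComp
          rw [NNReal.coe_sum, Finset.sum_mul]
          refine Finset.sum_congr rfl fun f _ => ?_
          rw [NNReal.coe_sum, Finset.sum_mul]
          refine Finset.sum_congr rfl fun g _ => ?_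
          simp only [apply_ite (fun x : ℝ≥0 => (x : ℝ)), NNReal.coe_mul, NNReal.coe_zero,
            ite_mul, zero_mul]
        · rw [Finset.sum_comm]
          refine Finset.sum_congr rfl fun f _ => ?_
          rw [Finset.sum_comm]
          refine Finset.sum_congr rfl fun g _ => ?_
          rw [Finset.sum_ite_eq Finset.univ (TOpc f g)
            (fun h => (w f : ℝ) * (v g : ℝ) * qval (R fun i => h fun j => a j i))]
          simp
      · rw [Finset.sum_comm]
        refine Finset.sum_congr rfl fun g _ => Finset.sum_congr rfl fun f _ => ?_
        rw [key f g]
        ring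
    rw [step1]
    have step2 : ∀ g : (Fin ℓ → C) → C,
        ∑ f : (Fin ℓ → C) → C, (v g : ℝ) * ((w f : ℝ) * qval (R fun i => f fun r => b g r i))
          ≤ (v g : ℝ) * ((ℓ : ℝ)⁻¹ * ∑ r : Fin ℓ, qval (R (b g r))) := by
      intro g
      rw [← Finset.mul_sum]
      by_cases hg : v g = 0
      · simp [hg]
      · exact mul_le_mul_of_nonneg_left ((hw (b g) (hbfin g hg)).2) (v g).2
    calc ∑ g : (Fin ℓ → C) → C, ∑ f : (Fin ℓ → C) → C,
          (v g : ℝ) * ((w f : ℝ) * qval (R fun i => f fun r => b g r i))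
        ≤ ∑ g : (Fin ℓ → C) → C, (v g : ℝ) * ((ℓ : ℝ)⁻¹ * ∑ r : Fin ℓ, qval (R (b g r))) :=
          Finset.sum_le_sum fun g _ => step2 g
      _ = ∑ r : Fin ℓ, (ℓ : ℝ)⁻¹ * ∑ g : (Fin ℓ → C) → C, (v g : ℝ) * qval (R (b g r)) := by
          trans (∑ g : (Fin ℓ → C) → C, ∑ r : Fin ℓ,
              (ℓ : ℝ)⁻¹ * ((v g : ℝ) * qval (R (b g r))))
          · refine Finset.sum_congr rfl fun g _ => ?_
            rw [← Finset.mul_sum, ← Finset.mul_sum]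
            ring
          · rw [Finset.sum_comm]
            refine Finset.sum_congr rfl fun r _ => ?_
            rw [← Finset.mul_sum]
      _ ≤ ∑ r : Fin ℓ, (ℓ : ℝ)⁻¹ * ((ℓ : ℝ)⁻¹ * ∑ j : Fin ℓ, qval (R (a j))) := by
          refine Finset.sum_le_sum fun r _ => mul_le_mul_of_nonneg_left ?_ (by positivity)
          calc ∑ g : (Fin ℓ → C) → C, (v g : ℝ) * qval (R (b g r))
              ≤ (ℓ : ℝ)⁻¹ * ∑ j : Fin ℓ, qval (R (a' r j)) := (hvgood r).2
            _ = (ℓ : ℝ)⁻¹ * ∑ j : Fin ℓ, qval (R (a j)) := by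
                congr 1
                exact Equiv.sum_comp (ρ^(r : ℕ)) (fun j => qval (R (a j)))
      _ = (ℓ : ℝ)⁻¹ * ∑ j : Fin ℓ, qval (R (a j)) := by
          rw [Finset.sum_const, Finset.card_univ, Fintype.card_fin, nsmul_eq_mul]
          field_simp

lemma fopComp_mass (w v : ((Fin ℓ → C) → C) → ℝ≥0) (B : Finset ((Fin ℓ → C) → C))
    (hBcl : ∀ f g, TOpc f g ∈ B → f ∈ B ∧ g ∈ B) :
    ∑ h ∈ B, fopComp w v h ≤ (∑ f ∈ B, w f) * (∑ g ∈ B, v g) := by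
  classical
  unfold fopComp
  rw [Finset.sum_comm]
  calc ∑ f : (Fin ℓ → C) → C, ∑ h ∈ B, ∑ g : (Fin ℓ → C) → C,
        (if TOpc f g = h then w f * v g else 0)
      = ∑ f : (Fin ℓ → C) → C, ∑ g : (Fin ℓ → C) → C,
          (if TOpc f g ∈ B then w f * v g else 0) := by
        refine Finset.sum_congr rfl fun f _ => ?_
        rw [Finset.sum_comm]
        refine Finset.sum_congr rfl fun g _ => ?_
        rw [Finset.sum_ite_eq B (TOpc f g) (fun _ => w f * v g)]
    _ ≤ ∑ f : (Fin ℓ → C) → C, ∑ g : (Fin ℓ → C) → C,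
          (if f ∈ B then (if g ∈ B then w f * v g else 0) else 0) := by
        refine Finset.sum_le_sum fun f _ => Finset.sum_le_sum fun g _ => ?_
        split_ifs with h1 h2 h3
        · exact le_rfl
        · exact absurd ((hBcl f g h1).2) h3
        · exact absurd ((hBcl f g h1).1) h2
        all_goals simp
    _ = (∑ f ∈ B, w f) * (∑ g ∈ B, v g) := by
        rw [Finset.sum_mul_sum]
        trans (∑ f : (Fin ℓ → C) → C, if f ∈ B then ∑ g ∈ B, w f * v g else 0)
        · refine Finset.sum_congr rfl fun f _ => ?_
          by_cases hf : f ∈ B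
          · simp only [hf, if_true]
            rw [Finset.sum_ite_mem, Finset.univ_inter]
          · simp [hf]
        · rw [Finset.sum_ite_mem, Finset.univ_inter]
end Comp

end CyclicAux


/-- a valued structure over a finite domain has a cyclic fractional
polymorphism (of some arity `ℓ ≥ 2`) if and only if the support of its fractional
polymorphisms contains a cyclic operation (of some arity `ℓ ≥ 2`). -/
theorem cyclic_fpol_iff_cyclic_in_support {τ : Signature} {C : Type}
    [Fintype C] [DecidableEq C] (Γ : VStruct τ C) :
    (∃ (ℓ : ℕ) (_ : 2 ≤ ℓ) (w : ((Fin ℓ → C) → C) → ℝ≥0),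
        FinFracPol Γ w ∧ ∀ f, w f ≠ 0 → IsCyclicOp f) ↔
      ∃ (ℓ : ℕ) (_ : 2 ≤ ℓ) (w : ((Fin ℓ → C) → C) → ℝ≥0) (f : (Fin ℓ → C) → C),
        FinFracPol Γ w ∧ w f ≠ 0 ∧ IsCyclicOp f := by
  classical
  constructor
  · rintro ⟨ℓ, hℓ, w, hpol, hcyc⟩
    have hex : ∃ f, w f ≠ 0 := by
      by_contra hzero
      push_neg at hzero
      have h1 := hpol.1
      rw [FinDist, Finset.sum_eq_zero (fun f _ => hzero f)] at h1
      exact one_ne_zero h1.symm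
    obtain ⟨f, hf⟩ := hex
    exact ⟨ℓ, hℓ, w, f, hpol, hf, hcyc f hf⟩
  · rintro ⟨ℓ, hℓ, w0, f₀, hpol, hwf₀, hcycf₀⟩
    obtain ⟨n, rfl⟩ : ∃ n, ℓ = n + 1 := ⟨ℓ - 1, by omega⟩
    have hℓ1 : 1 ≤ n + 1 := by omega
    refine ⟨n + 1, hℓ, ?_⟩
    set B : Finset ((Fin (n+1) → C) → C) :=
      Finset.univ.filter (fun h => ¬ IsCyclicOp h) with hB
    have hBcl : ∀ f g, TOpc f g ∈ B → f ∈ B ∧ g ∈ B := by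
      intro f g hfg
      rw [hB, Finset.mem_filter] at hfg
      by_contra hcon
      rw [not_and_or] at hcon
      have : IsCyclicOp f ∨ IsCyclicOp g := by
        rcases hcon with h | h <;> rw [hB, Finset.mem_filter] at h <;>
          simp only [Finset.mem_univ, true_and, not_not] at h
        · exact Or.inl h
        · exact Or.inr h
      exact hfg.2 (TOpc_cyclic this)
    set seq : ℕ → ((Fin (n+1) → C) → C) → ℝ≥0 :=
      fun m => Nat.rec (motive := fun _ => ((Fin (n+1) → C) → C) → ℝ≥0) w0
        (fun _ v => fopComp w0 v) m with hseq
    have hseqS : ∀ m, seq (m+1) = fopComp w0 (seq m) := fun m => rfl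
    have hdist : ∀ m, FinDist (seq m) := by
      intro m
      induction m with
      | zero => exact hpol.1
      | succ m ih => rw [hseqS]; exact fopComp_dist hpol.1 ih
    have hgood : ∀ m s, GoodFor (seq m) (Γ s) := by
      intro m
      induction m with
      | zero => exact fun s => (finImproves_iff hℓ1 w0 (Γ s)).1 (hpol.2 s)
      | succ m ih =>
        intro s
        rw [hseqS]
        exact fopComp_good hℓ1 ((finImproves_iff hℓ1 w0 (Γ s)).1 (hpol.2 s)) (ih s)
    set q : ℝ≥0 := ∑ f ∈ B, w0 f with hq
    have hf₀B : f₀ ∉ B := by simp [hB, hcycf₀]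
    have hq1 : (q : ℝ) < 1 := by
      have hsub : q + w0 f₀ ≤ 1 := by
        have : q + w0 f₀ = ∑ f ∈ insert f₀ B, w0 f := by
          rw [Finset.sum_insert hf₀B, add_comm]
        rw [this, ← hpol.1]
        exact Finset.sum_le_sum_of_subset (Finset.subset_univ _)
      have h1 : (q : ℝ) + (w0 f₀ : ℝ) ≤ 1 := by exact_mod_cast hsub
      have h2 : (0 : ℝ) < (w0 f₀ : ℝ) := by exact_mod_cast zero_lt_iff.2 hwf₀
      linarith
    have hmass : ∀ m, ∑ h ∈ B, seq m h ≤ q^(m+1) := by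
      intro m
      induction m with
      | zero => rw [pow_one]; exact le_rfl
      | succ m ih =>
        rw [hseqS]
        calc ∑ h ∈ B, fopComp w0 (seq m) h
            ≤ (∑ f ∈ B, w0 f) * (∑ g ∈ B, seq m g) := fopComp_mass _ _ B hBcl
          _ ≤ q * q^(m+1) := mul_le_mul' le_rfl ih
          _ = q^(m+2) := by ring
    set xs : ℕ → ((Fin (n+1) → C) → C) → ℝ := fun m h => (seq m h : ℝ) with hxs
    have hmem : ∀ m, xs m ∈ stdSimplex ℝ ((Fin (n+1) → C) → C) := by
      intro m
      refine ⟨fun h => (seq m h).2, ?_⟩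
      have h1 := hdist m
      rw [FinDist] at h1
      calc ∑ h : (Fin (n+1) → C) → C, xs m h
          = ((∑ h : (Fin (n+1) → C) → C, seq m h : ℝ≥0) : ℝ) := (NNReal.coe_sum _ _).symm
        _ = 1 := by rw [h1]; norm_num
    obtain ⟨x, hx, φ, hφ, hconv⟩ :=
      (isCompact_stdSimplex ℝ ((Fin (n+1) → C) → C)).tendsto_subseq hmem
    have hcoord : ∀ h, Filter.Tendsto (fun m => xs (φ m) h) Filter.atTop (nhds (x h)) :=
      fun h => tendsto_pi_nhds.1 hconv h
    set W : ((Fin (n+1) → C) → C) → ℝ≥0 := fun h => Real.toNNReal (x h) with hW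
    have hWcoe : ∀ h, (W h : ℝ) = x h := fun h => Real.coe_toNNReal _ (hx.1 h)
    have hWcyc : ∀ f, W f ≠ 0 → IsCyclicOp f := by
      intro f hWf
      by_contra hnc
      have hfB : f ∈ B := by simp [hB, hnc]
      have hbound : ∀ m, xs (φ m) f ≤ (q : ℝ)^m := by
        intro m
        have h1 : seq (φ m) f ≤ q^(φ m + 1) :=
          le_trans (Finset.single_le_sum (fun i _ => (zero_le : 0 ≤ seq (φ m) i)) hfB) (hmass (φ m))
        have h2 : (q : ℝ)^(φ m + 1) ≤ (q : ℝ)^m := by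
          refine pow_le_pow_of_le_one q.2 hq1.le ?_
          have := hφ.le_apply (x := m)
          omega
        calc xs (φ m) f ≤ ((q^(φ m + 1) : ℝ≥0) : ℝ) := by exact_mod_cast h1
          _ = (q : ℝ)^(φ m + 1) := by push_cast; ring
          _ ≤ (q : ℝ)^m := h2
      have h0 : Filter.Tendsto (fun m => (q : ℝ)^m) Filter.atTop (nhds 0) :=
        tendsto_pow_atTop_nhds_zero_of_lt_one q.2 hq1
      have hle0 : x f ≤ 0 := le_of_tendsto_of_tendsto' (hcoord f) h0 hbound
      have : W f = 0 := by
        rw [hW]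
        exact Real.toNNReal_of_nonpos hle0
      exact hWf this
    refine ⟨W, ⟨?_, ?_⟩, hWcyc⟩
    · show ∑ h : (Fin (n+1) → C) → C, W h = 1
      have : ((∑ h : (Fin (n+1) → C) → C, W h : ℝ≥0) : ℝ) = 1 := by
        rw [NNReal.coe_sum]
        calc ∑ h : (Fin (n+1) → C) → C, (W h : ℝ)
            = ∑ h : (Fin (n+1) → C) → C, x h := Finset.sum_congr rfl fun h _ => hWcoe h
          _ = 1 := hx.2
      exact_mod_cast this
    · intro s
      rw [finImproves_iff hℓ1]
      intro a hfin
      have hgm : ∀ m, (∀ f, Γ s (fun i => f fun j => a j i) = ⊤ → seq (φ m) f = 0) ∧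
          ∑ f : (Fin (n+1) → C) → C,
            (seq (φ m) f : ℝ) * qval (Γ s fun i => f fun j => a j i) ≤
            ((n+1 : ℕ) : ℝ)⁻¹ * ∑ j : Fin (n+1), qval (Γ s (a j)) :=
        fun m => hgood (φ m) s a hfin
      constructor
      · intro h hT
        have hz : (fun m => xs (φ m) h) = (fun _ => (0:ℝ)) := by
          funext m
          rw [hxs]
          simp only []
          rw [(hgm m).1 h hT]
          norm_num
        have hx0 : x h = 0 := by
          refine tendsto_nhds_unique (hcoord h) ?_
          rw [hz]
          exact tendsto_const_nhds
        rw [hW]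
        simp [hx0]
      · have hle : ∀ m, ∑ h : (Fin (n+1) → C) → C,
            xs (φ m) h * qval (Γ s fun i => h fun j => a j i) ≤
            ((n+1 : ℕ) : ℝ)⁻¹ * ∑ j : Fin (n+1), qval (Γ s (a j)) := fun m => (hgm m).2
        have htend : Filter.Tendsto
            (fun m => ∑ h : (Fin (n+1) → C) → C,
              xs (φ m) h * qval (Γ s fun i => h fun j => a j i))
            Filter.atTop
            (nhds (∑ h : (Fin (n+1) → C) → C, x h * qval (Γ s fun i => h fun j => a j i))) :=
        tendsto_finset_sum _ (fun h _ => (hcoord h).mul_const _)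
        have hfinal := le_of_tendsto htend (Filter.Eventually.of_forall hle)
        calc ∑ h : (Fin (n+1) → C) → C, (W h : ℝ) * qval (Γ s fun i => h fun j => a j i)
            = ∑ h : (Fin (n+1) → C) → C, x h * qval (Γ s fun i => h fun j => a j i) :=
              Finset.sum_congr rfl fun h _ => by rw [hWcoe]
          _ ≤ _ := hfinal
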